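/- The involution Phi on D_n preserves the dinv statistic: dinv(Phi(w)) = dinv(w), where dinv(w) is the number of pairs (i,j) with i < j such that eta_i = eta_j or eta_j = eta_i - 1 in the height sequence of w. -/

import Mathlib

/-- Number of occurrences of the letter `a` (encoded `true`). -/
def countA (w : List Bool) : ℕ := (w.filter (fun x => x = true)).length

/-- Number of occurrences of the letter `b` (encoded `false`). -/
def countB (w : List Bool) : ℕ := (w.filter (fun x => x = false)).length

/-- `delta w = |w|_a - |w|_b`. -/
def delta (w : List Bool) : ℤ := (countA w : ℤ) - (countB w : ℤ)

/-- `D_n`: words with `n-1` a's, `n` b's, every strict prefix with `delta ≥ 0`. -/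
def inDn (n : ℕ) (w : List Bool) : Prop :=
  countA w = n - 1 ∧ countB w = n ∧
    ∀ u v : List Bool, w = u ++ v → v ≠ [] → 0 ≤ delta u

/-- Heights of the occurrences of `a` in a word, starting from height `h`. -/
def heightsAux : List Bool → ℤ → List ℤ
  | [], _ => []
  | (true :: t), h => h :: heightsAux t (h + 1)
  | (false :: t), h => heightsAux t (h - 1)

/-- The height sequence of a word: `eta i = delta` of the prefix preceding the
`i`-th occurrence of `a`. -/
def heights (w : List Bool) : List ℤ := heightsAux w 0

/-- The `dinv` statistic: pairs `i < j` with `eta i = eta j` or `eta j = eta i - 1`. -/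
def dinv (w : List Bool) : ℕ :=
  ((Finset.range (heights w).length ×ˢ Finset.range (heights w).length).filter
    (fun p => p.1 < p.2 ∧
      ((heights w).getD p.1 0 = (heights w).getD p.2 0 ∨
        (heights w).getD p.2 0 = (heights w).getD p.1 0 - 1))).card

lemma delta_cons_true (t : List Bool) : delta (true :: t) = delta t + 1 := by
  simp [delta, countA, countB, List.filter]; ring

lemma delta_cons_false (t : List Bool) : delta (false :: t) = delta t - 1 := by
  simp [delta, countA, countB, List.filter]; ring

lemma delta_append (x y : List Bool) : delta (x ++ y) = delta x + delta y := by
  simp [delta, countA, countB]; ring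

lemma delta_reverse (l : List Bool) : delta l.reverse = delta l := by
  simp [delta, countA, countB, List.filter_reverse]

lemma heightsAux_shift (l : List Bool) (a : ℤ) :
    ∀ h : ℤ, heightsAux l (a + h) = (heightsAux l h).map (a + ·) := by
  induction l with
  | nil => intro h; rfl
  | cons x t ih =>
    intro h
    cases x
    · show heightsAux t (a + h - 1) = _
      rw [show a + h - 1 = a + (h - 1) by ring, ih]; rfl
    · show (a + h) :: heightsAux t (a + h + 1) = _
      rw [show a + h + 1 = a + (h + 1) by ring, ih]; rfl

lemma heightsAux_append (x y : List Bool) :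
    ∀ h : ℤ, heightsAux (x ++ y) h = heightsAux x h ++ heightsAux y (h + delta x) := by
  induction x with
  | nil => intro h; simp [heightsAux, delta, countA, countB]
  | cons b t ih =>
    intro h
    cases b
    · show heightsAux (t ++ y) (h - 1) = heightsAux t (h - 1) ++ _
      rw [ih, delta_cons_false, show h + (delta t - 1) = (h - 1) + delta t by ring]
    · show h :: heightsAux (t ++ y) (h + 1) = (h :: heightsAux t (h + 1)) ++ _
      rw [ih, delta_cons_true, show h + (delta t + 1) = (h + 1) + delta t by ring]
      rfl

lemma heightsAux_reverse (l : List Bool) :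
    heightsAux l.reverse 0 = ((heightsAux l 0).map (fun x => delta l - 1 - x)).reverse := by
  induction l with
  | nil => rfl
  | cons b t ih =>
    rw [List.reverse_cons, heightsAux_append, ih, delta_reverse]
    cases b
    · have h1 : heightsAux [false] (0 + delta t) = [] := rfl
      have h2 : heightsAux (false :: t) 0 = (heightsAux t 0).map ((-1 : ℤ) + ·) := by
        show heightsAux t (0 - 1) = _
        rw [show (0 : ℤ) - 1 = -1 + 0 by ring, heightsAux_shift]
      rw [h1, h2, List.map_map, List.append_nil]
      congr 1
      apply List.map_congr_left
      intro x _
      simp [delta_cons_false]; ring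
    · have h1 : heightsAux [true] (0 + delta t) = [delta t] := by
        show [0 + delta t] = _
        norm_num
      have h2 : heightsAux (true :: t) 0 = 0 :: (heightsAux t 0).map ((1 : ℤ) + ·) := by
        show (0 : ℤ) :: heightsAux t (0 + 1) = _
        rw [show (0 : ℤ) + 1 = 1 + 0 by ring, heightsAux_shift]
      rw [h1, h2, List.map_cons, List.map_map, List.reverse_cons]
      congr 1
      · apply congrArg
        apply List.map_congr_left
        intro x _
        simp [delta_cons_true]; ring
      · simp [delta_cons_true]

def Dstat (l : List ℤ) : ℕ :=
  ((Finset.range l.length ×ˢ Finset.range l.length).filter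
    (fun p => p.1 < p.2 ∧
      (l.getD p.1 0 = l.getD p.2 0 ∨ l.getD p.2 0 = l.getD p.1 0 - 1))).card

lemma getD_append_left (A B : List ℤ) {i : ℕ} (h : i < A.length) :
    (A ++ B).getD i 0 = A.getD i 0 := by
  rw [List.getD_eq_getElem _ _ (by simp; omega), List.getD_eq_getElem _ _ h]
  exact List.getElem_append_left ..

lemma getD_append_right (A B : List ℤ) {i : ℕ} (h : A.length ≤ i) (h2 : i < A.length + B.length) :
    (A ++ B).getD i 0 = B.getD (i - A.length) 0 := by
  rw [List.getD_eq_getElem _ _ (by simp; omega), List.getD_eq_getElem _ _ (by omega)]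
  exact List.getElem_append_right h

lemma getD_rev_map (f : ℤ → ℤ) (A : List ℤ) {i : ℕ} (h : i < A.length) :
    ((A.map f).reverse).getD i 0 = f (A.getD (A.length - 1 - i) 0) := by
  rw [List.getD_eq_getElem _ _ (by simpa), List.getD_eq_getElem _ _ (by omega),
    List.getElem_reverse, List.getElem_map]
  congr 1
  simp

lemma Dstat_phi (A B : List ℤ) (c : ℤ) :
    Dstat ((A.map (fun x => c + 1 - x)).reverse ++ (B.map (fun x => c - x)).reverse)
      = Dstat (A ++ B) := by
  set p := A.length with hp
  set q := B.length with hq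
  set l' := (A.map (fun x => c + 1 - x)).reverse ++ (B.map (fun x => c - x)).reverse with hl'
  set l := A ++ B with hl
  have hlen : l.length = p + q := by simp [hl, hp, hq]
  have hlen' : l'.length = p + q := by simp [hl', hp, hq]
  -- value lemmas
  have valA' : ∀ i : ℕ, i < p → l'.getD i 0 = c + 1 - A.getD (p - 1 - i) 0 := by
    intro i hi
    rw [hl', getD_append_left _ _ (by simpa), getD_rev_map _ _ (by simpa using hi)]
  have valB' : ∀ i : ℕ, p ≤ i → i < p + q → l'.getD i 0 = c - B.getD (p + q - 1 - i) 0 := by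
    intro i h1 h2
    rw [hl', getD_append_right _ _ (by simpa) (by simp; omega),
      getD_rev_map _ _ (by simp; omega)]
    congr 2
    simp; omega
  have valA : ∀ i : ℕ, i < p → l.getD i 0 = A.getD i 0 := by
    intro i hi; rw [hl, getD_append_left _ _ hi]
  have valB : ∀ i : ℕ, p ≤ i → i < p + q → l.getD i 0 = B.getD (i - p) 0 := by
    intro i h1 h2; rw [hl, getD_append_right _ _ h1 (by omega)]
  -- the involution on index pairs
  set σ : ℕ × ℕ → ℕ × ℕ := fun a =>
    if a.2 < p then (p - 1 - a.2, p - 1 - a.1)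
    else if a.1 < p then (p - 1 - a.1, 2 * p + q - 1 - a.2)
    else (2 * p + q - 1 - a.2, 2 * p + q - 1 - a.1) with hσ
  have mem : ∀ (m : List ℤ) (a : ℕ × ℕ),
      (a ∈ (Finset.range m.length ×ˢ Finset.range m.length).filter
        (fun p => p.1 < p.2 ∧
          (m.getD p.1 0 = m.getD p.2 0 ∨ m.getD p.2 0 = m.getD p.1 0 - 1))) ↔
      (a.1 < m.length ∧ a.2 < m.length ∧ a.1 < a.2 ∧
        (m.getD a.1 0 = m.getD a.2 0 ∨ m.getD a.2 0 = m.getD a.1 0 - 1)) := by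
    intro m a
    simp only [Finset.mem_filter, Finset.mem_product, Finset.mem_range]
    tauto
  apply Finset.card_bij' (fun a _ => σ a) (fun a _ => σ a)
  · rintro ⟨i, j⟩ ha
    rw [mem] at ha ⊢
    rw [hlen'] at ha
    rw [hlen]
    obtain ⟨hi, hj, hij, hcond⟩ := ha
    by_cases h2 : j < p
    · -- both in A-part
      have h1 : i < p := by omega
      rw [valA' i h1, valA' j (by omega)] at hcond
      simp only [hσ, if_pos h2]
      refine ⟨by omega, by omega, by omega, ?_⟩
      rw [valA _ (by omega), valA _ (by omega)]
      omega
    · by_cases h1 : i < p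
      · -- cross
        rw [valA' i h1, valB' j (by omega) (by omega)] at hcond
        simp only [hσ, if_neg h2, if_pos h1]
        refine ⟨by omega, by omega, by omega, ?_⟩
        rw [valA _ (by omega), valB _ (by omega) (by omega)]
        have e : 2 * p + q - 1 - j - p = p + q - 1 - j := by omega
        rw [e]
        omega
      · -- both in B-part
        rw [valB' i (by omega) (by omega), valB' j (by omega) (by omega)] at hcond
        simp only [hσ, if_neg h2, if_neg h1]
        refine ⟨by omega, by omega, by omega, ?_⟩
        rw [valB _ (by omega) (by omega), valB _ (by omega) (by omega)]
        have e1 : 2 * p + q - 1 - j - p = p + q - 1 - j := by omega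
        have e2 : 2 * p + q - 1 - i - p = p + q - 1 - i := by omega
        rw [e1, e2]
        omega
  · rintro ⟨i, j⟩ ha
    rw [mem] at ha ⊢
    rw [hlen] at ha
    rw [hlen']
    obtain ⟨hi, hj, hij, hcond⟩ := ha
    by_cases h2 : j < p
    · have h1 : i < p := by omega
      rw [valA i h1, valA j (by omega)] at hcond
      simp only [hσ, if_pos h2]
      refine ⟨by omega, by omega, by omega, ?_⟩
      rw [valA' _ (by omega), valA' _ (by omega)]
      have e1 : p - 1 - (p - 1 - j) = j := by omega
      have e2 : p - 1 - (p - 1 - i) = i := by omega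
      rw [e1, e2]
      omega
    · by_cases h1 : i < p
      · rw [valA i h1, valB j (by omega) (by omega)] at hcond
        simp only [hσ, if_neg h2, if_pos h1]
        refine ⟨by omega, by omega, by omega, ?_⟩
        rw [valA' _ (by omega), valB' _ (by omega) (by omega)]
        have e1 : p - 1 - (p - 1 - i) = i := by omega
        have e2 : p + q - 1 - (2 * p + q - 1 - j) = j - p := by omega
        rw [e1, e2]
        omega
      · rw [valB i (by omega) (by omega), valB j (by omega) (by omega)] at hcond
        simp only [hσ, if_neg h2, if_neg h1]
        refine ⟨by omega, by omega, by omega, ?_⟩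
        rw [valB' _ (by omega) (by omega), valB' _ (by omega) (by omega)]
        have e1 : p + q - 1 - (2 * p + q - 1 - j) = j - p := by omega
        have e2 : p + q - 1 - (2 * p + q - 1 - i) = i - p := by omega
        rw [e1, e2]
        omega
  · rintro ⟨i, j⟩ ha
    rw [mem, hlen'] at ha
    obtain ⟨hi, hj, hij, -⟩ := ha
    show σ (σ (i, j)) = (i, j)
    simp only [hσ]
    split_ifs <;> simp_all only [Prod.mk.injEq, Prod.fst, Prod.snd, not_lt] <;> omega
  · rintro ⟨i, j⟩ ha
    rw [mem, hlen] at ha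
    obtain ⟨hi, hj, hij, -⟩ := ha
    show σ (σ (i, j)) = (i, j)
    simp only [hσ]
    split_ifs <;> simp_all only [Prod.mk.injEq, Prod.fst, Prod.snd, not_lt] <;> omega


lemma length_eq_counts (w : List Bool) : w.length = countA w + countB w := by
  induction w with
  | nil => rfl
  | cons b t ih => cases b <;> simp [countA, countB, List.filter] at * <;> omega

theorem stmt18 (n : ℕ) (w u v : List Bool) (hw : w = u ++ v) (hin : inDn n w)
    (hmax : ∀ u' v' : List Bool, w = u' ++ v' →
      delta u' ≤ delta u ∧ (delta u' = delta u → u'.length ≤ u.length)) :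
    dinv (u.reverse ++ v.reverse) = dinv w := by
  have hA := hin.1
  have hB := hin.2.1
  rcases Nat.eq_zero_or_pos n with hn | hn
  · subst hn
    have hw0 : w = [] := by
      have hl := length_eq_counts w
      rw [hA, hB] at hl
      exact List.length_eq_zero_iff.mp (by omega)
    rw [hw0] at hw
    obtain ⟨hu, hv⟩ := List.append_eq_nil_iff.mp hw.symm
    subst hu; subst hv; rw [hw0]; rfl
  · have hdw : delta w = -1 := by
      unfold delta
      rw [hA, hB]
      have : (n : ℤ) - 1 = ((n - 1 : ℕ) : ℤ) := by push_cast [hn]; ring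
      omega
    subst hw
    have hdv : delta v = -1 - delta u := by
      have h := delta_append u v
      omega
    show Dstat (heightsAux (u.reverse ++ v.reverse) 0) = Dstat (heightsAux (u ++ v) 0)
    rw [heightsAux_append u v 0, heightsAux_append u.reverse v.reverse 0]
    have e1 : heightsAux u.reverse 0 =
        ((heightsAux u 0).map (fun x => (delta u - 2) + 1 - x)).reverse := by
      rw [heightsAux_reverse]
      congr 1
      apply List.map_congr_left
      intro x _
      ring
    have e2 : heightsAux v.reverse (0 + delta u.reverse) =
        ((heightsAux v (0 + delta u)).map (fun x => (delta u - 2) - x)).reverse := by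
      rw [delta_reverse, show (0 : ℤ) + delta u = delta u + 0 by ring, heightsAux_shift,
        heightsAux_shift, heightsAux_reverse, List.map_map, List.map_reverse, List.map_map]
      congr 1
      apply List.map_congr_left
      intro x _
      simp only [Function.comp_apply]
      rw [hdv]
      ring
    rw [e1, e2]
    exact Dstat_phi _ _ (delta u - 2)
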